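/- Prune-by-dominance (Lemma 2 of the paper): Let F ⊆ V be a set of vertices such that every neighbor of every vertex of F also lies in a set A ⊇ F of assigned vertices, with partial configuration σ_A on A. Suppose there exists another partial configuration σ'_A on A, agreeing with σ_A outside F, such that the partial energy localized on F satisfies E_F(σ'_A) < E_F(σ_A). Then for every complete configuration σ extending σ_A there exists a complete configuration σ' with E(σ') < E(σ); in particular no extension of σ_A is a ground state. -/
import Mathlib


/-- Lemma 2, prune-by-dominance: Let `F ⊆ A` with every neighbor of every
vertex of `F` lying in the assigned set `A`.  If a partial configuration `σA'`, agreeing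
with `σA` outside `F`, has strictly lower partial energy localized on `F`, then every
complete extension `σ` of `σA` is dominated by some configuration of strictly lower
total energy; in particular no extension of `σA` is a ground state. -/
theorem prune_by_dominance {V : Type*} [Fintype V] [DecidableEq V]
    (E : Finset (V × V)) (J : V × V → ℝ) (h : V → ℝ)
    (A F : Finset V) (hFA : F ⊆ A)
    (hInt : ∀ i ∈ F, ∀ e ∈ E, (e.1 = i → e.2 ∈ A) ∧ (e.2 = i → e.1 ∈ A))
    (σA σA' : V → ℝ)
    (hσA : ∀ i, σA i = 1 ∨ σA i = -1) (hσA' : ∀ i, σA' i = 1 ∨ σA' i = -1)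
    (hagree : ∀ i ∈ A, i ∉ F → σA i = σA' i)
    (hless :
      (-(∑ i ∈ F, h i * σA' i)
          - ∑ e ∈ E.filter (fun e => e.1 ∈ F ∨ e.2 ∈ F), J e * σA' e.1 * σA' e.2) <
        (-(∑ i ∈ F, h i * σA i)
          - ∑ e ∈ E.filter (fun e => e.1 ∈ F ∨ e.2 ∈ F), J e * σA e.1 * σA e.2)) :
    ∀ σ : V → ℝ, (∀ i, σ i = 1 ∨ σ i = -1) → (∀ i ∈ A, σ i = σA i) →
      (∃ σ' : V → ℝ, (∀ i, σ' i = 1 ∨ σ' i = -1) ∧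
        (-(∑ e ∈ E, J e * σ' e.1 * σ' e.2) - ∑ i, h i * σ' i) <
          (-(∑ e ∈ E, J e * σ e.1 * σ e.2) - ∑ i, h i * σ i)) ∧
      ¬ (∀ τ : V → ℝ, (∀ i, τ i = 1 ∨ τ i = -1) →
          (-(∑ e ∈ E, J e * σ e.1 * σ e.2) - ∑ i, h i * σ i) ≤
            (-(∑ e ∈ E, J e * τ e.1 * τ e.2) - ∑ i, h i * τ i)) := by
  intro σ hσ hext
  set σ' : V → ℝ := fun i => if i ∈ F then σA' i else σ i with hσ'def
  have hσ'pm : ∀ i, σ' i = 1 ∨ σ' i = -1 := by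
    intro i; by_cases hi : i ∈ F <;> simp [hσ'def, hi, hσA' i, hσ i]
  -- key: σ' agrees with σA' on every endpoint of an edge touching F
  have hend : ∀ e ∈ E, (e.1 ∈ F ∨ e.2 ∈ F) →
      σ' e.1 = σA' e.1 ∧ σ' e.2 = σA' e.2 ∧ σ e.1 = σA e.1 ∧ σ e.2 = σA e.2 := by
    intro e he hor
    have h1 : e.1 ∈ A := by
      rcases hor with h1 | h2
      · exact hFA h1
      · exact (hInt e.2 h2 e he).2 rfl
    have h2 : e.2 ∈ A := by
      rcases hor with h1 | h2
      · exact (hInt e.1 h1 e he).1 rfl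
      · exact hFA h2
    refine ⟨?_, ?_, hext _ h1, hext _ h2⟩
    · by_cases hf : e.1 ∈ F
      · simp [hσ'def, hf]
      · simp only [hσ'def, hf, if_false]
        rw [hext _ h1, hagree _ h1 hf]
    · by_cases hf : e.2 ∈ F
      · simp [hσ'def, hf]
      · simp only [hσ'def, hf, if_false]
        rw [hext _ h2, hagree _ h2 hf]
  have hedges : ∀ τ : V → ℝ, ∑ e ∈ E, J e * τ e.1 * τ e.2 =
      (∑ e ∈ E.filter (fun e => e.1 ∈ F ∨ e.2 ∈ F), J e * τ e.1 * τ e.2)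
      + ∑ e ∈ E.filter (fun e => ¬(e.1 ∈ F ∨ e.2 ∈ F)), J e * τ e.1 * τ e.2 := by
    intro τ; exact (Finset.sum_filter_add_sum_filter_not E _ _).symm
  have hverts : ∀ τ : V → ℝ, ∑ i, h i * τ i =
      (∑ i ∈ F, h i * τ i) + ∑ i ∈ Fᶜ, h i * τ i := by
    intro τ; exact (Finset.sum_add_sum_compl F _).symm
  -- equal pieces
  have hE1 : ∑ e ∈ E.filter (fun e => e.1 ∈ F ∨ e.2 ∈ F), J e * σ' e.1 * σ' e.2
      = ∑ e ∈ E.filter (fun e => e.1 ∈ F ∨ e.2 ∈ F), J e * σA' e.1 * σA' e.2 := by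
    apply Finset.sum_congr rfl
    intro e he
    rw [Finset.mem_filter] at he
    obtain ⟨h1, h2, _, _⟩ := hend e he.1 he.2
    rw [h1, h2]
  have hE2 : ∑ e ∈ E.filter (fun e => e.1 ∈ F ∨ e.2 ∈ F), J e * σ e.1 * σ e.2
      = ∑ e ∈ E.filter (fun e => e.1 ∈ F ∨ e.2 ∈ F), J e * σA e.1 * σA e.2 := by
    apply Finset.sum_congr rfl
    intro e he
    rw [Finset.mem_filter] at he
    obtain ⟨_, _, h3, h4⟩ := hend e he.1 he.2
    rw [h3, h4]
  have hE3 : ∑ e ∈ E.filter (fun e => ¬(e.1 ∈ F ∨ e.2 ∈ F)), J e * σ' e.1 * σ' e.2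
      = ∑ e ∈ E.filter (fun e => ¬(e.1 ∈ F ∨ e.2 ∈ F)), J e * σ e.1 * σ e.2 := by
    apply Finset.sum_congr rfl
    intro e he
    rw [Finset.mem_filter] at he
    push_neg at he
    simp [hσ'def, he.2.1, he.2.2]
  have hV1 : ∑ i ∈ F, h i * σ' i = ∑ i ∈ F, h i * σA' i := by
    apply Finset.sum_congr rfl; intro i hi; simp [hσ'def, hi]
  have hV2 : ∑ i ∈ F, h i * σ i = ∑ i ∈ F, h i * σA i := by
    apply Finset.sum_congr rfl; intro i hi; rw [hext _ (hFA hi)]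
  have hV3 : ∑ i ∈ Fᶜ, h i * σ' i = ∑ i ∈ Fᶜ, h i * σ i := by
    apply Finset.sum_congr rfl; intro i hi
    rw [Finset.mem_compl] at hi; simp [hσ'def, hi]
  have hlt : (-(∑ e ∈ E, J e * σ' e.1 * σ' e.2) - ∑ i, h i * σ' i) <
      (-(∑ e ∈ E, J e * σ e.1 * σ e.2) - ∑ i, h i * σ i) := by
    rw [hedges σ', hedges σ, hverts σ', hverts σ, hE1, hE2, hE3, hV1, hV2, hV3]
    linarith
  refine ⟨⟨σ', hσ'pm, hlt⟩, fun hall => ?_⟩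
  exact absurd (hall σ' hσ'pm) (not_le.mpr hlt)
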